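/- In R² with μ = 0 and L = 1, the dataset (x_1, t_1) = ((0,0),(0,0)), (x_2, t_2) = ((1,0),(0,0)), (x_3, t_3) = ((1/2,0),(0,-1/2)) satisfies ⟨t_i - t_j, x_i - x_j⟩ ≥ 0 and ‖t_i - t_j‖ ≤ ‖x_i - x_j‖ for all i, j in {1,2,3}, yet there exists no monotone 1-Lipschitz operator T : R² → R² with T(x_i) = t_i for i = 1, 2, 3. -/

import Mathlib

open RealInnerProductSpace

/-- Build a vector of `EuclideanSpace ℝ (Fin 2)` from two coordinates. -/
noncomputable def e2 (a b : ℝ) : EuclideanSpace ℝ (Fin 2) :=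
  (WithLp.equiv 2 (Fin 2 → ℝ)).symm ![a, b]

@[simp] lemma e2_app0 (a b : ℝ) : e2 a b 0 = a := rfl
@[simp] lemma e2_app1 (a b : ℝ) : e2 a b 1 = b := rfl

lemma e2_zero : e2 0 0 = 0 := by
  ext i; fin_cases i <;> simp [e2]

lemma sub_e2 (a b c d : ℝ) : e2 a b - e2 c d = e2 (a - c) (b - d) := by
  ext i; fin_cases i <;> simp [e2]

lemma inner_e2 (a b c d : ℝ) : ⟪e2 a b, e2 c d⟫ = a * c + b * d := by
  simp [PiLp.inner_apply, Fin.sum_univ_two]; ring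

lemma norm_e2 (a b : ℝ) : ‖e2 a b‖ = Real.sqrt (a ^ 2 + b ^ 2) := by
  simp [e2, EuclideanSpace.norm_eq, Fin.sum_univ_two, sq]

lemma inner_right_e2 (u : EuclideanSpace ℝ (Fin 2)) (c d : ℝ) :
    ⟪u, e2 c d⟫ = u 0 * c + u 1 * d := by
  simp [PiLp.inner_apply, Fin.sum_univ_two]; ring

lemma coord1_le_norm (u : EuclideanSpace ℝ (Fin 2)) : |u 1| ≤ ‖u‖ := by
  rw [EuclideanSpace.norm_eq, Fin.sum_univ_two, ← Real.sqrt_sq_eq_abs]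
  apply Real.sqrt_le_sqrt
  rw [Real.norm_eq_abs, Real.norm_eq_abs, sq_abs, sq_abs]
  nlinarith [sq_nonneg (u 0)]

theorem stmt13 (x t : Fin 3 → EuclideanSpace ℝ (Fin 2))
    (hx : x = ![e2 0 0, e2 1 0, e2 (1 / 2) 0])
    (ht : t = ![e2 0 0, e2 0 0, e2 0 (-1 / 2)]) :
    (∀ i j : Fin 3, 0 ≤ ⟪t i - t j, x i - x j⟫ ∧ ‖t i - t j‖ ≤ ‖x i - x j‖) ∧
    ¬ ∃ T : EuclideanSpace ℝ (Fin 2) → EuclideanSpace ℝ (Fin 2),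
        (∀ a b, 0 ≤ ⟪T a - T b, a - b⟫) ∧ (∀ a b, ‖T a - T b‖ ≤ ‖a - b‖) ∧
        (∀ i, T (x i) = t i) := by
  subst hx ht
  constructor
  · intro i j
    fin_cases i <;> fin_cases j <;>
      refine ⟨?_, ?_⟩ <;>
      simp [sub_e2, inner_e2, norm_e2, Real.sqrt_sq_eq_abs, abs_div, abs_neg, abs_one, abs_two] <;>
      first
        | (norm_num; done)
        | exact Real.sqrt_le_sqrt (by norm_num)
        | positivity
        | ((rw [abs_of_nonneg] <;> norm_num); done)
        | ((rw [abs_of_nonpos] <;> norm_num); done)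
        | exact le_abs_self _
  · rintro ⟨T, hmono, hlip, hinterp⟩
    have h0 := hinterp 0
    have h1 := hinterp 1
    have h2 := hinterp 2
    simp only [Matrix.cons_val_zero, Matrix.cons_val_one, Matrix.head_cons,
      Matrix.cons_val_two, Matrix.tail_cons] at h0 h1 h2
    have m0 := hmono (e2 (1/2) (1/4)) (e2 0 0)
    have m1 := hmono (e2 (1/2) (1/4)) (e2 1 0)
    rw [h0, e2_zero, sub_zero, sub_zero] at m0
    rw [h1, e2_zero, sub_zero] at m1
    have hz1 : e2 (1/2) (1/4) - e2 1 0 = e2 (-(1/2)) (1/4) := by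
      rw [sub_e2]; norm_num
    rw [hz1] at m1
    rw [inner_right_e2] at m0 m1
    set u := T (e2 (1/2) (1/4)) with hu
    have hb : 0 ≤ u 1 := by nlinarith
    have hl := hlip (e2 (1/2) (1/4)) (e2 (1/2) 0)
    rw [h2] at hl
    have hz2 : e2 (1/2) (1/4) - e2 (1/2) 0 = e2 0 (1/4) := by
      rw [sub_e2]; norm_num
    rw [hz2, norm_e2] at hl
    have h14 : Real.sqrt ((0:ℝ) ^ 2 + (1/4) ^ 2) = 1/4 := by
      rw [show (0:ℝ) ^ 2 + (1/4) ^ 2 = (1/4) ^ 2 by norm_num,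
        Real.sqrt_sq (by norm_num)]
    rw [h14] at hl
    have hcoord : |(u - e2 0 (-1/2)) 1| ≤ ‖u - e2 0 (-1/2)‖ := coord1_le_norm _
    have happ : (u - e2 0 (-1/2)) 1 = u 1 + 1/2 := by
      have h : (u - e2 0 (-1/2)) 1 = u 1 - (e2 0 (-1/2)) 1 := rfl
      rw [h, e2_app1]; ring
    rw [happ, abs_of_nonneg (by linarith)] at hcoord
    linarith
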